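/- Let V be a complex Banach space, p ∈ ℕ, and let A : ℝ → Matrix (Fin p) (Fin p) ℂ be bounded and continuous with every entry almost automorphic, upper triangular (a_{ij}(t) = 0 for all t whenever i > j), and such that for each i the function t ↦ Re(a_{ii}(t)) is ergodic with nonzero mean. Let f : ℝ → (Fin p → V) be bounded, continuous and almost automorphic. Then every bounded differentiable solution y : ℝ → (Fin p → V) of the system y_i'(t) = Σ_j a_{ij}(t)·y_j(t) + f_i(t), i = 1,…,p, is almost automorphic. -/

import Mathlib

open MeasureTheory Filter Topology Set

attribute [local instance] Matrix.linftyOpNormedAddCommGroup Matrix.linftyOpNormedRing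
  Matrix.linftyOpNormedAlgebra

/-- A continuous function `ψ : ℝ → V` into a Banach space is almost automorphic if for every
sequence of reals there is a subsequence `(τₙ)` and a function `ψ̃` with
`ψ(t+τₙ) → ψ̃(t)` and `ψ̃(t−τₙ) → ψ(t)` pointwise on `ℝ`. -/
def AlmostAutomorphic {V : Type*} [NormedAddCommGroup V] (ψ : ℝ → V) : Prop :=
  Continuous ψ ∧ ∀ σ : ℕ → ℝ, ∃ k : ℕ → ℕ, StrictMono k ∧ ∃ ψt : ℝ → V,
    (∀ t : ℝ, Tendsto (fun n => ψ (t + σ (k n))) atTop (𝓝 (ψt t))) ∧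
    (∀ t : ℝ, Tendsto (fun n => ψt (t - σ (k n))) atTop (𝓝 (ψ t)))

/-- A bounded continuous function `f : ℝ → ℝ` is ergodic with mean `M` if
`(1/(2T)) ∫_{−T+ξ}^{T+ξ} f(s) ds → M` as `T → ∞`, uniformly with respect to `ξ ∈ ℝ`. -/
def ErgodicMeanR (f : ℝ → ℝ) (M : ℝ) : Prop :=
  ∀ ε > 0, ∃ T₁ > (0 : ℝ), ∀ T ≥ T₁, ∀ ξ : ℝ,
    |(2 * T)⁻¹ * (∫ s in (-T + ξ)..(T + ξ), f s) - M| < ε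

section AA
variable {V : Type*} [NormedAddCommGroup V] {W : Type*} [NormedAddCommGroup W]

/-- Common extraction for a pair of almost automorphic functions. -/
lemma aa_pair {ψ : ℝ → V} {φ : ℝ → W} (hψ : AlmostAutomorphic ψ) (hφ : AlmostAutomorphic φ)
    (σ : ℕ → ℝ) : ∃ k : ℕ → ℕ, StrictMono k ∧ ∃ ψt : ℝ → V, ∃ φt : ℝ → W,
    (∀ t : ℝ, Tendsto (fun n => ψ (t + σ (k n))) atTop (𝓝 (ψt t))) ∧
    (∀ t : ℝ, Tendsto (fun n => ψt (t - σ (k n))) atTop (𝓝 (ψ t))) ∧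
    (∀ t : ℝ, Tendsto (fun n => φ (t + σ (k n))) atTop (𝓝 (φt t))) ∧
    (∀ t : ℝ, Tendsto (fun n => φt (t - σ (k n))) atTop (𝓝 (φ t))) := by
  obtain ⟨k₁, hk₁, ψt, h1, h2⟩ := hψ.2 σ
  obtain ⟨k₂, hk₂, φt, h3, h4⟩ := hφ.2 (σ ∘ k₁)
  refine ⟨k₁ ∘ k₂, hk₁.comp hk₂, ψt, φt, ?_, ?_, ?_, ?_⟩
  · exact fun t => (h1 t).comp hk₂.tendsto_atTop
  · exact fun t => (h2 t).comp hk₂.tendsto_atTop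
  · exact fun t => h3 t
  · exact fun t => h4 t

lemma aa_const (v : V) : AlmostAutomorphic (fun _ : ℝ => v) := by
  refine ⟨continuous_const, fun σ => ⟨id, strictMono_id, fun _ => v, ?_, ?_⟩⟩ <;>
    exact fun t => tendsto_const_nhds

lemma aa_zero : AlmostAutomorphic (fun _ : ℝ => (0 : V)) := aa_const 0

lemma AlmostAutomorphic.neg {ψ : ℝ → V} (h : AlmostAutomorphic ψ) :
    AlmostAutomorphic (fun t => -ψ t) := by
  obtain ⟨hc, h⟩ := h
  refine ⟨hc.neg, fun σ => ?_⟩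
  obtain ⟨k, hk, ψt, h1, h2⟩ := h σ
  exact ⟨k, hk, fun t => -ψt t, fun t => (h1 t).neg, fun t => (h2 t).neg⟩

lemma AlmostAutomorphic.add {ψ φ : ℝ → V} (hψ : AlmostAutomorphic ψ) (hφ : AlmostAutomorphic φ) :
    AlmostAutomorphic (fun t => ψ t + φ t) := by
  refine ⟨hψ.1.add hφ.1, fun σ => ?_⟩
  obtain ⟨k, hk, ψt, φt, h1, h2, h3, h4⟩ := aa_pair hψ hφ σ
  exact ⟨k, hk, fun t => ψt t + φt t, fun t => (h1 t).add (h3 t), fun t => (h2 t).add (h4 t)⟩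

lemma AlmostAutomorphic.smul [NormedSpace ℂ V] {c : ℝ → ℂ} {ψ : ℝ → V}
    (hc : AlmostAutomorphic c) (hψ : AlmostAutomorphic ψ) :
    AlmostAutomorphic (fun t => c t • ψ t) := by
  refine ⟨hc.1.smul hψ.1, fun σ => ?_⟩
  obtain ⟨k, hk, ct, ψt, h1, h2, h3, h4⟩ := aa_pair hc hψ σ
  exact ⟨k, hk, fun t => ct t • ψt t, fun t => (h1 t).smul (h3 t), fun t => (h2 t).smul (h4 t)⟩

lemma aa_finset_sum {ι : Type*} (s : Finset ι) (ψ : ι → ℝ → V)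
    (h : ∀ i ∈ s, AlmostAutomorphic (ψ i)) :
    AlmostAutomorphic (fun t => ∑ i ∈ s, ψ i t) := by
  classical
  induction s using Finset.induction_on with
  | empty => simpa using aa_zero
  | @insert a s' hx ih =>
    simp only [Finset.sum_insert hx]
    exact (h a (Finset.mem_insert_self _ _)).add (ih fun i hi => h i (Finset.mem_insert_of_mem hi))

lemma AlmostAutomorphic.eval {p : ℕ} {f : ℝ → (Fin p → V)} (h : AlmostAutomorphic f) (i : Fin p) :
    AlmostAutomorphic (fun t => f t i) := by
  refine ⟨(continuous_apply i).comp h.1, fun σ => ?_⟩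
  obtain ⟨k, hk, ft, h1, h2⟩ := h.2 σ
  exact ⟨k, hk, fun t => ft t i, fun t => (continuous_apply i).continuousAt.tendsto.comp (h1 t),
    fun t => (continuous_apply i).continuousAt.tendsto.comp (h2 t)⟩

lemma aa_comp_neg {ψ : ℝ → V} (h : AlmostAutomorphic ψ) :
    AlmostAutomorphic (fun t => ψ (-t)) := by
  refine ⟨h.1.comp continuous_neg, fun σ => ?_⟩
  obtain ⟨k, hk, ψt, h1, h2⟩ := h.2 (fun n => -σ n)
  refine ⟨k, hk, fun t => ψt (-t), fun t => ?_, fun t => ?_⟩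
  · have := h1 (-t); simpa [neg_add, sub_eq_add_neg] using this.congr (fun n => by ring_nf)
  · have := h2 (-t); simpa using this.congr (fun n => by ring_nf)

/-- Common extraction for finitely many AA functions with a common codomain. -/
lemma aa_family {n : ℕ} (ψ : Fin n → ℝ → V) (h : ∀ i, AlmostAutomorphic (ψ i)) (σ : ℕ → ℝ) :
    ∃ k : ℕ → ℕ, StrictMono k ∧ ∃ Ψ : Fin n → ℝ → V,
      (∀ i t, Tendsto (fun m => ψ i (t + σ (k m))) atTop (𝓝 (Ψ i t))) ∧
      (∀ i t, Tendsto (fun m => Ψ i (t - σ (k m))) atTop (𝓝 (ψ i t))) := by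
  induction n with
  | zero => exact ⟨id, strictMono_id, fun i => i.elim0, fun i => i.elim0, fun i => i.elim0⟩
  | succ n ih =>
    obtain ⟨k₁, hk₁, Ψ', h1, h2⟩ := ih (fun i => ψ i.succ) (fun i => h i.succ)
    obtain ⟨k₂, hk₂, ψ0, h3, h4⟩ := (h 0).2 (σ ∘ k₁)
    refine ⟨k₁ ∘ k₂, hk₁.comp hk₂, Fin.cons ψ0 Ψ', fun i => ?_, fun i => ?_⟩ <;>
      refine Fin.cases ?_ (fun j => ?_) i
    · exact fun t => h3 t
    · exact fun t => by simpa [Function.comp_def] using (h1 j t).comp hk₂.tendsto_atTop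
    · exact fun t => h4 t
    · exact fun t => by simpa [Function.comp_def] using (h2 j t).comp hk₂.tendsto_atTop


lemma decay_est {b : ℝ → ℝ} (hmeas : ∀ u t : ℝ, IntervalIntegrable b volume u t)
    {Cb : ℝ} (hCb : ∀ t, |b t| ≤ Cb) {m : ℝ} (hm0 : m < 0) {T₁ : ℝ} (hT₁ : 0 < T₁)
    (herg : ∀ T ≥ T₁, ∀ ξ : ℝ, |(2*T)⁻¹ * (∫ s in (-T+ξ)..(T+ξ), b s) - m| < -m/2) :
    ∀ u t : ℝ, u ≤ t → ∫ s in u..t, b s ≤ (Cb - m/2) * (2*T₁) + m/2 * (t - u) := by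
  intro u t hut
  have hCb0 : 0 ≤ Cb := le_trans (abs_nonneg _) (hCb 0)
  have hK0 : 0 ≤ (Cb - m/2) * (2*T₁) := by nlinarith
  by_cases hL : 2*T₁ ≤ t - u
  · set T := (t - u)/2 with hT
    have hTT₁ : T ≥ T₁ := by simp only [hT]; linarith
    have h2T : 0 < 2*T := by simp only [hT]; linarith
    have := herg T hTT₁ ((u+t)/2)
    have he1 : -T + (u+t)/2 = u := by simp only [hT]; ring
    have he2 : T + (u+t)/2 = t := by simp only [hT]; ring
    rw [he1, he2] at this
    have hlt : (2*T)⁻¹ * (∫ s in u..t, b s) < m/2 := by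
      have := abs_lt.1 this
      linarith [this.2]
    have : (∫ s in u..t, b s) < m/2 * (2*T) := by
      calc (∫ s in u..t, b s) = (2*T) * ((2*T)⁻¹ * (∫ s in u..t, b s)) := by
            rw [← mul_assoc, mul_inv_cancel₀ h2T.ne', one_mul]
        _ < (2*T) * (m/2) := by
            apply mul_lt_mul_of_pos_left hlt h2T
        _ = m/2 * (2*T) := by ring
    have h2TL : 2*T = t - u := by simp only [hT]; ring
    rw [h2TL] at this
    linarith
  · push_neg at hL
    have hbound : (∫ s in u..t, b s) ≤ Cb * (t - u) := by
      have := intervalIntegral.norm_integral_le_of_norm_le_const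
        (C := Cb) (f := b) (a := u) (b := t) (fun x _ => hCb x)
      rw [Real.norm_eq_abs] at this
      have h1 := (abs_le.1 this).2
      rwa [abs_of_nonneg (by linarith : (0:ℝ) ≤ t - u)] at h1
    nlinarith [hbound]

lemma ergodic_neg_reflect {f : ℝ → ℝ} {m : ℝ} (h : ErgodicMeanR f m) :
    ErgodicMeanR (fun t => -f (-t)) (-m) := by
  intro ε hε
  obtain ⟨T₁, hT₁, hh⟩ := h ε hε
  refine ⟨T₁, hT₁, fun T hT ξ => ?_⟩
  have key : (∫ s in (-T + ξ)..(T + ξ), -f (-s)) = -(∫ s in (-T + -ξ)..(T + -ξ), f s) := by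
    rw [intervalIntegral.integral_neg]
    congr 1
    rw [intervalIntegral.integral_comp_neg (f := f)]
    congr 1 <;> ring
  rw [key]
  have := hh T hT (-ξ)
  calc |(2*T)⁻¹ * -(∫ s in (-T + -ξ)..(T + -ξ), f s) - -m|
      = |(2*T)⁻¹ * (∫ s in (-T + -ξ)..(T + -ξ), f s) - m| := by rw [← abs_neg]; ring_nf
    _ < ε := this


end AA

section Scalar
variable {V : Type*} [NormedAddCommGroup V] [NormedSpace ℂ V] [CompleteSpace V]

lemma hasDerivAt_primitive {a : ℝ → ℂ} (ha : Continuous a) (t : ℝ) :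
    HasDerivAt (fun u => ∫ r in (0:ℝ)..u, a r) (a t) t :=
  intervalIntegral.integral_hasDerivAt_right (ha.intervalIntegrable _ _)
    (ha.stronglyMeasurableAtFilter _ _) ha.continuousAt

lemma repr_formula {a : ℝ → ℂ} (ha : Continuous a) {g : ℝ → V} (hg : Continuous g)
    {y : ℝ → V} (hy : ∀ t, HasDerivAt y (a t • y t + g t) t) (s t : ℝ) :
    y t = Complex.exp (∫ r in s..t, a r) • y s
      + ∫ u in s..t, Complex.exp (∫ r in u..t, a r) • g u := by
  set P : ℝ → ℂ := fun u => ∫ r in (0:ℝ)..u, a r with hPdef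
  have hP : ∀ u, HasDerivAt P (a u) u := hasDerivAt_primitive ha
  have hPc : Continuous P := continuous_iff_continuousAt.2 fun u => (hP u).continuousAt
  set z : ℝ → V := fun u => Complex.exp (-P u) • y u with hzdef
  have hz : ∀ u, HasDerivAt z (Complex.exp (-P u) • g u) u := by
    intro u
    have h1 : HasDerivAt (fun w => Complex.exp (-P w)) (Complex.exp (-P u) * -a u) u :=
      ((hP u).neg).cexp
    have h2 := h1.smul (hy u)
    convert h2 using 1
    · rfl
    rw [smul_add, mul_smul, neg_smul, smul_neg]
    abel
  have hzc : Continuous fun u => Complex.exp (-P u) • g u :=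
    ((hPc.neg).cexp).smul hg
  have key : (∫ u in s..t, Complex.exp (-P u) • g u) = z t - z s :=
    intervalIntegral.integral_eq_sub_of_hasDerivAt (fun u _ => hz u)
      (hzc.intervalIntegrable _ _)
  have hsub : ∀ w : ℝ, P t - P w = ∫ r in w..t, a r := fun w =>
    intervalIntegral.integral_interval_sub_left (ha.intervalIntegrable _ _)
      (ha.intervalIntegrable _ _)
  have hyz : ∀ w : ℝ, Complex.exp (P t) • z w = Complex.exp (P t - P w) • y w := by
    intro w
    rw [hzdef]
    simp only [smul_smul, ← Complex.exp_add, sub_eq_add_neg]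
  have hyt : y t = Complex.exp (P t) • z t := by
    rw [hyz t]; simp
  calc y t = Complex.exp (P t) • z t := hyt
    _ = Complex.exp (P t) • (z s + ∫ u in s..t, Complex.exp (-P u) • g u) := by
        rw [key]; congr 1; abel
    _ = Complex.exp (P t) • z s
        + Complex.exp (P t) • ∫ u in s..t, Complex.exp (-P u) • g u := by
        rw [smul_add]
    _ = Complex.exp (P t - P s) • y s
        + ∫ u in s..t, Complex.exp (P t - P u) • g u := by
        rw [hyz s, ← intervalIntegral.integral_smul]
        congr 1
        apply intervalIntegral.integral_congr
        intro u _
        simp only [smul_smul, ← Complex.exp_add, sub_eq_add_neg]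
    _ = Complex.exp (∫ r in s..t, a r) • y s
        + ∫ u in s..t, Complex.exp (∫ r in u..t, a r) • g u := by
        rw [hsub s]
        congr 1
        apply intervalIntegral.integral_congr
        intro u _
        simp only [hsub u]

lemma setIntegral_Iic_shift (F : ℝ → V) (c τ : ℝ) :
    ∫ v in Iic c, F (v + τ) = ∫ u in Iic (c + τ), F u := by
  have key : (fun v => (Iic c).indicator (fun w => F (w + τ)) v)
      = fun v => (Iic (c + τ)).indicator F (v + τ) := by
    funext v
    by_cases h : v ≤ c
    · rw [indicator_of_mem (mem_Iic.2 h), indicator_of_mem (mem_Iic.2 (by linarith))]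
    · rw [indicator_of_notMem (fun hh => h (mem_Iic.1 hh)),
        indicator_of_notMem (fun hh => h (by have := mem_Iic.1 hh; linarith))]
  rw [← integral_indicator measurableSet_Iic, ← integral_indicator measurableSet_Iic, key,
    integral_add_right_eq_self]

/-- norm of the exponential kernel, under the decay estimate. -/
lemma kernel_norm_le {b : ℝ → ℂ} (hbi : ∀ u t : ℝ, IntervalIntegrable b volume u t)
    {m K : ℝ}
    (hdec : ∀ u t : ℝ, u ≤ t → (∫ s in u..t, (b s).re) ≤ K + m/2*(t-u))
    {u t : ℝ} (hut : u ≤ t) :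
    ‖Complex.exp (∫ r in u..t, b r)‖ ≤ Real.exp (K + m/2*(t-u)) := by
  rw [Complex.norm_exp]
  apply Real.exp_le_exp.2
  have hre : (∫ r in u..t, b r).re = ∫ r in u..t, (b r).re := by
    have h := Complex.reCLM.intervalIntegral_comp_comm (hbi u t)
    simpa using h.symm
  rw [hre]; exact hdec u t hut

lemma integrableOn_kernel_smul {b : ℝ → ℂ}
    (hbi : ∀ u t : ℝ, IntervalIntegrable b volume u t) {m K : ℝ} (hm : m < 0) (hK : 0 ≤ K)
    (hdec : ∀ u t : ℝ, u ≤ t → (∫ s in u..t, (b s).re) ≤ K + m/2*(t-u))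
    {G : ℝ → V} (hGm : AEStronglyMeasurable G volume) {Cg : ℝ} (hG : ∀ u, ‖G u‖ ≤ Cg)
    (t : ℝ) :
    IntegrableOn (fun u => Complex.exp (∫ r in u..t, b r) • G u) (Iic t) := by
  have hker_cont : Continuous fun u => ∫ r in u..t, b r := by
    have h1 : Continuous fun u => ∫ r in t..u, b r :=
      intervalIntegral.continuous_primitive (fun a b => hbi a b) t
    have : (fun u => ∫ r in u..t, b r) = fun u => -∫ r in t..u, b r := by
      funext u; rw [intervalIntegral.integral_symm]
    rw [this]; exact h1.neg
  have hmeas : AEStronglyMeasurable (fun u => Complex.exp (∫ r in u..t, b r) • G u) volume :=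
    ((Complex.continuous_exp.comp hker_cont).aestronglyMeasurable).smul hGm
  have hc : 0 < -(m/2) := by linarith
  refine Integrable.mono'
    (g := fun u => (Real.exp (K + m/2*t) * Cg) * Real.exp (-(m/2) * u)) ?_ hmeas.restrict ?_
  · exact ((integrableOn_exp_mul_Iic hc t).const_mul _)
  · rw [MeasureTheory.ae_restrict_iff' measurableSet_Iic]
    filter_upwards with u hu
    have hut : u ≤ t := mem_Iic.1 hu
    calc ‖Complex.exp (∫ r in u..t, b r) • G u‖
        = ‖Complex.exp (∫ r in u..t, b r)‖ * ‖G u‖ := norm_smul _ _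
      _ ≤ Real.exp (K + m/2*(t-u)) * Cg := by
          apply mul_le_mul (kernel_norm_le hbi hdec hut) (hG u) (norm_nonneg _)
            (Real.exp_pos _).le
      _ = (Real.exp (K + m/2*t) * Cg) * Real.exp (-(m/2) * u) := by
          rw [show K + m/2*(t-u) = (K + m/2*t) + (-(m/2)*u) by ring, Real.exp_add,
            mul_right_comm]

lemma integrableOn_decay_bound {m : ℝ} (hm : m < 0) (K Cg t : ℝ) :
    IntegrableOn (fun v => Real.exp (K + m/2*(t-v)) * Cg) (Iic t) := by
  have hc : 0 < -(m/2) := by linarith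
  have : (fun v => Real.exp (K + m/2*(t-v)) * Cg)
      = fun v => (Real.exp (K + m/2*t) * Cg) * Real.exp (-(m/2) * v) := by
    funext v
    rw [show K + m/2*(t-v) = (K + m/2*t) + (-(m/2)*v) by ring, Real.exp_add]
    ring
  rw [this]
  exact (integrableOn_exp_mul_Iic hc t).const_mul _

lemma tendsto_exp_kernel_atBot {m K Cy : ℝ} (hm : m < 0) (t : ℝ) :
    Tendsto (fun s : ℝ => Real.exp (K + m/2*(t-s)) * Cy) atBot (𝓝 0) := by
  have hc : 0 < -(m/2) := by linarith
  have harg : Tendsto (fun s : ℝ => K + m/2*(t-s)) atBot atBot := by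
    have h1 : Tendsto (fun s : ℝ => -(m/2) * s) atBot atBot := by
      exact tendsto_id.const_mul_atBot hc
    have h2 : Tendsto (fun s : ℝ => (K + m/2*t) + -(m/2) * s) atBot atBot :=
      tendsto_atBot_add_const_left _ _ h1
    refine h2.congr (fun s => by ring)
  have := Real.tendsto_exp_atBot.comp harg
  simpa using this.mul_const Cy

lemma repr_Iic {a : ℝ → ℂ} (ha : Continuous a) {g : ℝ → V} (hg : Continuous g)
    {y : ℝ → V} (hy : ∀ t, HasDerivAt y (a t • y t + g t) t)
    {m K : ℝ} (hm : m < 0) (hK : 0 ≤ K)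
    (hdec : ∀ u t : ℝ, u ≤ t → (∫ s in u..t, (a s).re) ≤ K + m/2*(t-u))
    {Cg : ℝ} (hCg : ∀ u, ‖g u‖ ≤ Cg) {Cy : ℝ} (hCy : ∀ u, ‖y u‖ ≤ Cy) (t : ℝ) :
    y t = ∫ u in Iic t, Complex.exp (∫ r in u..t, a r) • g u := by
  have hbi : ∀ u t : ℝ, IntervalIntegrable a volume u t := fun u t => ha.intervalIntegrable u t
  have hInt : IntegrableOn (fun u => Complex.exp (∫ r in u..t, a r) • g u) (Iic t) :=
    integrableOn_kernel_smul hbi hm hK hdec hg.aestronglyMeasurable hCg t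
  have h1 : Tendsto (fun s : ℝ => ∫ u in s..t, Complex.exp (∫ r in u..t, a r) • g u) atBot
      (𝓝 (∫ u in Iic t, Complex.exp (∫ r in u..t, a r) • g u)) :=
    intervalIntegral_tendsto_integral_Iic t hInt tendsto_id
  have heq : ∀ s : ℝ, (∫ u in s..t, Complex.exp (∫ r in u..t, a r) • g u)
      = y t - Complex.exp (∫ r in s..t, a r) • y s := by
    intro s
    rw [repr_formula ha hg hy s t]
    abel
  have hE : Tendsto (fun s : ℝ => Complex.exp (∫ r in s..t, a r) • y s) atBot (𝓝 0) := by
    apply squeeze_zero_norm' (a := fun s => Real.exp (K + m/2*(t-s)) * Cy)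
    · filter_upwards [eventually_le_atBot t] with s hs
      rw [norm_smul]
      exact mul_le_mul (kernel_norm_le hbi hdec hs) (hCy s) (norm_nonneg _) (Real.exp_pos _).le
    · exact tendsto_exp_kernel_atBot hm t
  have h2 : Tendsto (fun s : ℝ => y t - Complex.exp (∫ r in s..t, a r) • y s) atBot
      (𝓝 (y t - 0)) := tendsto_const_nhds.sub hE
  rw [sub_zero] at h2
  have := tendsto_nhds_unique ((tendsto_congr heq).1 h1) h2
  exact this.symm
lemma kernel_cont {b : ℝ → ℂ} (hbi : ∀ u t : ℝ, IntervalIntegrable b volume u t) (t : ℝ) :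
    Continuous fun u => ∫ r in u..t, b r := by
  have h1 : Continuous fun u => ∫ r in t..u, b r :=
    intervalIntegral.continuous_primitive (fun a b => hbi a b) t
  have : (fun u => ∫ r in u..t, b r) = fun u => -∫ r in t..u, b r := by
    funext u; rw [intervalIntegral.integral_symm]
  rw [this]; exact h1.neg

lemma scalar_neg {a : ℝ → ℂ} (haa : AlmostAutomorphic a) {Ca : ℝ} (hCa : ∀ t, ‖a t‖ ≤ Ca)
    {m : ℝ} (hm : m < 0) (herg : ErgodicMeanR (fun t => (a t).re) m)
    {g : ℝ → V} (hgaa : AlmostAutomorphic g) {Cg : ℝ} (hCg : ∀ t, ‖g t‖ ≤ Cg)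
    {y : ℝ → V} (hy : ∀ t, HasDerivAt y (a t • y t + g t) t)
    {Cy : ℝ} (hCy : ∀ t, ‖y t‖ ≤ Cy) : AlmostAutomorphic y := by
  have ha : Continuous a := haa.1
  have hgc : Continuous g := hgaa.1
  have hyc : Continuous y := continuous_iff_continuousAt.2 fun t => (hy t).continuousAt
  have hCa0 : 0 ≤ Ca := le_trans (norm_nonneg _) (hCa 0)
  obtain ⟨T₁, hT₁, hergT⟩ := herg (-m/2) (by linarith)
  set K : ℝ := (Ca - m/2) * (2*T₁) with hKdef
  have hK : 0 ≤ K := by nlinarith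
  have hre_int : ∀ u t : ℝ, IntervalIntegrable (fun s => (a s).re) volume u t :=
    fun u t => (Complex.continuous_re.comp ha).intervalIntegrable u t
  have hre_bd : ∀ t, |(a t).re| ≤ Ca := fun t => le_trans (Complex.abs_re_le_norm _) (hCa t)
  have hdeca : ∀ u t : ℝ, u ≤ t → (∫ s in u..t, (a s).re) ≤ K + m/2*(t-u) :=
    decay_est hre_int hre_bd hm hT₁ hergT
  have hshiftc : ∀ τ' : ℝ, Continuous fun s => a (s + τ') :=
    fun τ' => ha.comp (continuous_id.add continuous_const)
  have hbiτ : ∀ τ' u t : ℝ, IntervalIntegrable (fun s => a (s + τ')) volume u t :=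
    fun τ' u t => (hshiftc τ').intervalIntegrable u t
  have hdecτ : ∀ τ' u t : ℝ, u ≤ t → (∫ s in u..t, (a (s+τ')).re) ≤ K + m/2*(t-u) := by
    intro τ' u t hut
    rw [intervalIntegral.integral_comp_add_right (fun s => (a s).re) τ']
    have h2 := hdeca (u+τ') (t+τ') (by linarith)
    rw [show t+τ'-(u+τ') = t-u by ring] at h2; exact h2
  have ydef : ∀ t, y t = ∫ u in Iic t, Complex.exp (∫ r in u..t, a r) • g u :=
    repr_Iic ha hgc hy hm hK hdeca hCg hCy
  refine ⟨hyc, fun σ => ?_⟩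
  obtain ⟨k, hk, aT, gT, h1, h2, h3, h4⟩ := aa_pair haa hgaa σ
  set τ : ℕ → ℝ := fun n => σ (k n) with hτdef
  -- boundedness and measurability of the limits
  have haTb : ∀ s, ‖aT s‖ ≤ Ca := fun s =>
    le_of_tendsto (h1 s).norm (Eventually.of_forall fun n => hCa _)
  have hgTb : ∀ s, ‖gT s‖ ≤ Cg := fun s =>
    le_of_tendsto (h3 s).norm (Eventually.of_forall fun n => hCg _)
  have haTm : StronglyMeasurable aT := by
    refine stronglyMeasurable_of_tendsto (u := atTop) (f := fun n => fun s => a (s + τ n))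
      (fun n => (hshiftc (τ n)).stronglyMeasurable) ?_
    rw [tendsto_pi_nhds]; intro s; exact h1 s
  have hgTm : StronglyMeasurable gT := by
    refine stronglyMeasurable_of_tendsto (u := atTop) (f := fun n => fun s => g (s + τ n))
      (fun n => (hgc.comp (continuous_id.add continuous_const)).stronglyMeasurable) ?_
    rw [tendsto_pi_nhds]; intro s; exact h3 s
  have huIoc : ∀ u t : ℝ, volume (Set.uIoc u t) ≠ ⊤ := by
    intro u t; rw [Set.uIoc]; exact measure_Ioc_lt_top.ne
  have haTiτ : ∀ τ' u t : ℝ, IntervalIntegrable (fun s => aT (s + τ')) volume u t := by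
    intro τ' u t
    rw [intervalIntegrable_iff]
    exact Measure.integrableOn_of_bounded (huIoc u t)
      ((haTm.comp_measurable (measurable_id.add_const τ')).aestronglyMeasurable)
      (ae_of_all _ fun s => haTb _)
  have haTi : ∀ u t : ℝ, IntervalIntegrable aT volume u t := by
    intro u t
    have := haTiτ 0 u t
    simpa using this
  -- convergence of interval integrals
  have hconva : ∀ u t : ℝ, Tendsto (fun n => ∫ s in u..t, a (s + τ n)) atTop
      (𝓝 (∫ s in u..t, aT s)) := by
    intro u t
    apply intervalIntegral.tendsto_integral_filter_of_dominated_convergence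
      (bound := fun _ => Ca)
    · exact Eventually.of_forall fun n => ((hshiftc (τ n)).aestronglyMeasurable).restrict
    · exact Eventually.of_forall fun n => ae_of_all _ fun x _ => hCa _
    · exact intervalIntegrable_const
    · exact ae_of_all _ fun x _ => h1 x
  have hconvaT : ∀ u t : ℝ, Tendsto (fun n => ∫ s in u..t, aT (s + -τ n)) atTop
      (𝓝 (∫ s in u..t, a s)) := by
    intro u t
    apply intervalIntegral.tendsto_integral_filter_of_dominated_convergence
      (bound := fun _ => Ca)
    · exact Eventually.of_forall fun n =>
        ((haTm.comp_measurable (measurable_id.add_const (-τ n))).aestronglyMeasurable).restrict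
    · exact Eventually.of_forall fun n => ae_of_all _ fun x _ => haTb _
    · exact intervalIntegrable_const
    · refine ae_of_all _ fun x _ => (h2 x).congr fun n => by rw [sub_eq_add_neg]
  -- decay estimate for aT
  have hdecaT : ∀ u t : ℝ, u ≤ t → (∫ s in u..t, (aT s).re) ≤ K + m/2*(t-u) := by
    intro u t hut
    have hre : (∫ s in u..t, (aT s).re) = (∫ s in u..t, aT s).re := by
      have h := Complex.reCLM.intervalIntegral_comp_comm (haTi u t); simpa using h
    rw [hre]
    have hlim : Tendsto (fun n => (∫ s in u..t, a (s + τ n)).re) atTop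
        (𝓝 ((∫ s in u..t, aT s).re)) := (Complex.continuous_re.tendsto _).comp (hconva u t)
    refine le_of_tendsto hlim (Eventually.of_forall fun n => ?_)
    have hren : (∫ s in u..t, a (s + τ n)).re = ∫ s in u..t, (a (s + τ n)).re := by
      have h := Complex.reCLM.intervalIntegral_comp_comm (hbiτ (τ n) u t); simpa using h.symm
    rw [hren]; exact hdecτ (τ n) u t hut
  have hdecaTτ : ∀ τ' u t : ℝ, u ≤ t → (∫ s in u..t, (aT (s+τ')).re) ≤ K + m/2*(t-u) := by
    intro τ' u t hut
    rw [intervalIntegral.integral_comp_add_right (fun s => (aT s).re) τ']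
    have h2' := hdecaT (u+τ') (t+τ') (by linarith)
    rw [show t+τ'-(u+τ') = t-u by ring] at h2'; exact h2'
  -- the candidate limit function
  refine ⟨k, hk, fun t => ∫ u in Iic t, Complex.exp (∫ r in u..t, aT r) • gT u,
    fun t => ?_, fun t => ?_⟩
  · -- forward convergence
    have hrew : ∀ n, y (t + τ n)
        = ∫ v in Iic t, Complex.exp (∫ r in v..t, a (r + τ n)) • g (v + τ n) := by
      intro n
      rw [ydef (t + τ n),
        ← setIntegral_Iic_shift (fun u => Complex.exp (∫ r in u..(t + τ n), a r) • g u) t (τ n)]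
      refine setIntegral_congr_fun measurableSet_Iic fun v _ => ?_
      rw [intervalIntegral.integral_comp_add_right (fun r => a r) (τ n)]
    have key := MeasureTheory.tendsto_integral_filter_of_dominated_convergence
      (μ := volume.restrict (Iic t))
      (F := fun n v => Complex.exp (∫ r in v..t, a (r + τ n)) • g (v + τ n))
      (f := fun v => Complex.exp (∫ r in v..t, aT r) • gT v)
      (bound := fun v => Real.exp (K + m/2*(t-v)) * Cg)
      (Eventually.of_forall fun n =>
        (((Complex.continuous_exp.comp (kernel_cont (hbiτ (τ n)) t)).smul
          (hgc.comp (continuous_id.add continuous_const))).aestronglyMeasurable).restrict)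
      (Eventually.of_forall fun n => by
        rw [MeasureTheory.ae_restrict_iff' measurableSet_Iic]
        filter_upwards with v hv
        have hvt : v ≤ t := mem_Iic.1 hv
        rw [norm_smul]
        exact mul_le_mul (kernel_norm_le (hbiτ (τ n)) (hdecτ (τ n)) hvt) (hCg _)
          (norm_nonneg _) (Real.exp_pos _).le)
      (integrableOn_decay_bound hm K Cg t)
      (ae_of_all _ fun v =>
        ((Complex.continuous_exp.tendsto _).comp (hconva v t)).smul (h3 v))
    exact (tendsto_congr hrew).2 key
  · -- backward convergence
    have hrew2 : ∀ n, (∫ u in Iic (t - τ n),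
          Complex.exp (∫ r in u..(t - τ n), aT r) • gT u)
        = ∫ v in Iic t, Complex.exp (∫ r in v..t, aT (r + -τ n)) • gT (v + -τ n) := by
      intro n
      have hshift := setIntegral_Iic_shift
        (fun u => Complex.exp (∫ r in u..(t - τ n), aT r) • gT u) t (-τ n)
      rw [show t + -τ n = t - τ n by ring] at hshift
      rw [← hshift]
      refine setIntegral_congr_fun measurableSet_Iic fun v _ => ?_
      rw [intervalIntegral.integral_comp_add_right (fun r => aT r) (-τ n),
        show t + -τ n = t - τ n by ring]
    have key := MeasureTheory.tendsto_integral_filter_of_dominated_convergence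
      (μ := volume.restrict (Iic t))
      (F := fun n v => Complex.exp (∫ r in v..t, aT (r + -τ n)) • gT (v + -τ n))
      (f := fun v => Complex.exp (∫ r in v..t, a r) • g v)
      (bound := fun v => Real.exp (K + m/2*(t-v)) * Cg)
      (Eventually.of_forall fun n =>
        (((Complex.continuous_exp.comp (kernel_cont (haTiτ (-τ n)) t)).aestronglyMeasurable).smul
          ((hgTm.comp_measurable (measurable_id.add_const (-τ n))).aestronglyMeasurable)).restrict)
      (Eventually.of_forall fun n => by
        rw [MeasureTheory.ae_restrict_iff' measurableSet_Iic]
        filter_upwards with v hv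
        have hvt : v ≤ t := mem_Iic.1 hv
        rw [norm_smul]
        exact mul_le_mul (kernel_norm_le (haTiτ (-τ n)) (hdecaTτ (-τ n)) hvt) (hgTb _)
          (norm_nonneg _) (Real.exp_pos _).le)
      (integrableOn_decay_bound hm K Cg t)
      (ae_of_all _ fun v =>
        ((Complex.continuous_exp.tendsto _).comp (hconvaT v t)).smul
          ((h4 v).congr fun n => by rw [sub_eq_add_neg]))
    rw [show (fun n => (fun tt => ∫ u in Iic tt, Complex.exp (∫ r in u..tt, aT r) • gT u) (t - τ n))
        = fun n => ∫ u in Iic (t - τ n), Complex.exp (∫ r in u..(t - τ n), aT r) • gT u from rfl]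
    rw [tendsto_congr hrew2, ydef t]
    exact key
lemma scalar_aa {a : ℝ → ℂ} (haa : AlmostAutomorphic a) {Ca : ℝ} (hCa : ∀ t, ‖a t‖ ≤ Ca)
    {m : ℝ} (hm : m ≠ 0) (herg : ErgodicMeanR (fun t => (a t).re) m)
    {g : ℝ → V} (hgaa : AlmostAutomorphic g) {Cg : ℝ} (hCg : ∀ t, ‖g t‖ ≤ Cg)
    {y : ℝ → V} (hy : ∀ t, HasDerivAt y (a t • y t + g t) t)
    {Cy : ℝ} (hCy : ∀ t, ‖y t‖ ≤ Cy) : AlmostAutomorphic y := by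
  rcases hm.lt_or_gt with hneg | hpos
  · exact scalar_neg haa hCa hneg herg hgaa hCg hy hCy
  · have haa' : AlmostAutomorphic (fun t => -a (-t)) := (aa_comp_neg haa).neg
    have hgaa' : AlmostAutomorphic (fun t => -g (-t)) := (aa_comp_neg hgaa).neg
    have hy' : ∀ t, HasDerivAt (fun s => y (-s))
        ((-a (-t)) • y (-t) + -g (-t)) t := by
      intro t
      have hcomp := (hy (-t)).scomp t (hasDerivAt_neg t)
      convert hcomp using 1
      · rfl
      rw [neg_one_smul, neg_add, neg_smul]
    have herg' : ErgodicMeanR (fun t => ((-a (-t) : ℂ)).re) (-m) := by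
      have h := ergodic_neg_reflect (f := fun t => (a t).re) herg
      convert h using 2
      simp
    have hyaa' : AlmostAutomorphic (fun s => y (-s)) :=
      scalar_neg haa' (Ca := Ca) (fun t => by simpa using hCa (-t)) (by linarith) herg'
        hgaa' (Cg := Cg) (fun t => by simpa using hCg (-t)) hy'
        (Cy := Cy) (fun t => hCy (-t))
    have := aa_comp_neg hyaa'
    simpa [neg_neg] using this
end Scalar

theorem massera_triangular_system_ergodic_diagonal
    {V : Type*} [NormedAddCommGroup V] [NormedSpace ℂ V] [CompleteSpace V] {p : ℕ}
    (A : ℝ → Matrix (Fin p) (Fin p) ℂ)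
    (hAc : Continuous A) (hAb : ∃ C, ∀ t, ‖A t‖ ≤ C)
    (hAaa : ∀ i j : Fin p, AlmostAutomorphic (fun t => A t i j))
    (htri : ∀ (t : ℝ) (i j : Fin p), j < i → A t i j = 0)
    (hdiag : ∀ i : Fin p, ∃ m : ℝ, m ≠ 0 ∧ ErgodicMeanR (fun t => (A t i i).re) m)
    (f : ℝ → (Fin p → V)) (hfc : Continuous f) (hfb : ∃ C, ∀ t, ‖f t‖ ≤ C)
    (hfaa : AlmostAutomorphic f)
    (y : ℝ → (Fin p → V))
    (hy : ∀ (t : ℝ) (i : Fin p),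
      HasDerivAt (fun t => y t i) ((∑ j : Fin p, A t i j • y t j) + f t i) t)
    (hyb : ∃ C, ∀ t : ℝ, ‖y t‖ ≤ C) :
    AlmostAutomorphic y := by
  classical
  obtain ⟨CA, hCA⟩ := hAb
  obtain ⟨Cf, hCf⟩ := hfb
  obtain ⟨Cy, hCy⟩ := hyb
  have hCA0 : 0 ≤ CA := le_trans (norm_nonneg _) (hCA 0)
  have hCy0 : 0 ≤ Cy := le_trans (norm_nonneg _) (hCy 0)
  have hentry : ∀ t (i j : Fin p), ‖A t i j‖ ≤ CA := by
    intro t i j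
    have h1 : ‖A t i j‖₊ ≤ ‖A t‖₊ := by
      rw [Matrix.linfty_opNNNorm_def]
      exact le_trans (Finset.single_le_sum (f := fun j' => ‖A t i j'‖₊)
        (fun _ _ => zero_le) (Finset.mem_univ j))
        (Finset.le_sup (f := fun i => ∑ j : Fin p, ‖A t i j‖₊) (Finset.mem_univ i))
    calc ‖A t i j‖ = (‖A t i j‖₊ : ℝ) := (coe_nnnorm _).symm
      _ ≤ (‖A t‖₊ : ℝ) := NNReal.coe_le_coe.2 h1
      _ = ‖A t‖ := coe_nnnorm _
      _ ≤ CA := hCA t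
  have hycomp : ∀ (i : Fin p) t, ‖y t i‖ ≤ Cy :=
    fun i t => le_trans (norm_le_pi_norm (y t) i) (hCy t)
  have hy' : ∀ (i : Fin p) (t : ℝ), HasDerivAt (fun t => y t i)
      (A t i i • y t i
        + ((∑ j ∈ Finset.univ.erase i, A t i j • y t j) + f t i)) t := by
    intro i t
    have h := hy t i
    rw [← Finset.add_sum_erase Finset.univ (fun j => A t i j • y t j) (Finset.mem_univ i),
      add_assoc] at h
    exact h
  have main : ∀ N : ℕ, ∀ i : Fin p, p - i.val ≤ N → AlmostAutomorphic (fun t => y t i) := by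
    intro N
    induction N with
    | zero => intro i hi; exact absurd hi (by have := i.isLt; omega)
    | succ N ih =>
      intro i hi
      have hterm : ∀ j ∈ Finset.univ.erase i, AlmostAutomorphic (fun t => A t i j • y t j) := by
        intro j hj
        rcases lt_trichotomy j i with hlt | heq | hgt
        · have hz : (fun t => A t i j • y t j) = fun _ => (0 : V) := by
            funext t; rw [htri t i j hlt, zero_smul]
          rw [hz]; exact aa_zero
        · exact absurd heq (Finset.ne_of_mem_erase hj)
        · have hgt' : i.val < j.val := hgt
          have hyj : AlmostAutomorphic (fun t => y t j) :=
            ih j (by have := j.isLt; omega)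
          exact (hAaa i j).smul hyj
      have hgaa2 : AlmostAutomorphic
          (fun t => (∑ j ∈ Finset.univ.erase i, A t i j • y t j) + f t i) :=
        (aa_finset_sum _ _ hterm).add (hfaa.eval i)
      have hgbd : ∀ t, ‖(∑ j ∈ Finset.univ.erase i, A t i j • y t j) + f t i‖
          ≤ (p : ℝ) * (CA * Cy) + Cf := by
        intro t
        refine le_trans (norm_add_le _ _) (add_le_add ?_
          (le_trans (norm_le_pi_norm (f t) i) (hCf t)))
        calc ‖∑ j ∈ Finset.univ.erase i, A t i j • y t j‖
            ≤ ∑ j ∈ Finset.univ.erase i, ‖A t i j • y t j‖ := norm_sum_le _ _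
          _ ≤ ∑ _j ∈ Finset.univ.erase i, CA * Cy := by
              refine Finset.sum_le_sum fun j _ => ?_
              rw [norm_smul]
              exact mul_le_mul (hentry t i j) (hycomp j t) (norm_nonneg _) hCA0
          _ = ((Finset.univ.erase i).card : ℝ) * (CA * Cy) := by
              rw [Finset.sum_const, nsmul_eq_mul]
          _ ≤ (p : ℝ) * (CA * Cy) := by
              have hcard : (Finset.univ.erase i).card ≤ p := by
                calc (Finset.univ.erase i).card ≤ (Finset.univ : Finset (Fin p)).card :=
                  Finset.card_le_card (Finset.erase_subset _ _)
                _ = p := Finset.card_univ.trans (Fintype.card_fin p)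
              exact mul_le_mul_of_nonneg_right (Nat.cast_le.2 hcard) (by positivity)
      obtain ⟨m, hm0, hergm⟩ := hdiag i
      exact scalar_aa (hAaa i i) (fun t => hentry t i i) hm0 hergm hgaa2 hgbd
        (hy' i) (hycomp i)
  have hcomp : ∀ i : Fin p, AlmostAutomorphic (fun t => y t i) :=
    fun i => main p i (by omega)
  refine ⟨continuous_pi fun i => (hcomp i).1, fun σ => ?_⟩
  obtain ⟨k, hk, Ψ, hf1, hf2⟩ := aa_family (fun i => fun t => y t i) hcomp σ
  refine ⟨k, hk, fun t i => Ψ i t, fun t => ?_, fun t => ?_⟩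
  · rw [tendsto_pi_nhds]; intro i; exact hf1 i t
  · rw [tendsto_pi_nhds]; intro i; exact hf2 i t
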